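/- arXiv:1310.7417 — 4 statements merged into one kernel-verified Lean document; each statement's English description precedes it below -/
import Mathlib

section
/- The collection S_∞ := {∅} ∪ {{u} | u ∈ A*} ∪ {Cone_∞(u) | u ∈ A*}, where Cone_∞(u) = {v ∈ A^∞ | u is a prefix of v}, is a semiring of sets on A^∞ = A* ∪ A^ω. -/
open MeasureTheory

/-- `A^∞ = A* ∪ A^ω`, the finite and infinite words over `A`. -/
abbrev WordsInf (A : Type*) := List A ⊕ (ℕ → A)

/-- `u` is a prefix of the (finite or infinite) word `w`. -/
def IsPrefixInf {A : Type*} (u : List A) (w : WordsInf A) : Prop :=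
  match w with
  | Sum.inl v => u <+: v
  | Sum.inr v => ∀ i : Fin u.length, v i = u.get i

/-- The ∞-cone of a finite word `u`: all finite and infinite words with prefix `u`. -/
def ConeInf {A : Type*} (u : List A) : Set (WordsInf A) :=
  {w | IsPrefixInf u w}

/-- `S_∞`: the empty set, singletons of finite words, and ∞-cones. -/
def SInf (A : Type*) : Set (Set (WordsInf A)) :=
  {∅} ∪ {s | ∃ u : List A, s = {Sum.inl u}} ∪ {s | ∃ u : List A, s = ConeInf u}

namespace SInfAux

variable {A : Type*}

lemma mem_cone_inl {u v : List A} : Sum.inl v ∈ ConeInf u ↔ u <+: v := Iff.rfl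

lemma mem_cone_inr {u : List A} {f : ℕ → A} :
    Sum.inr f ∈ ConeInf u ↔ ∀ i : Fin u.length, f i = u.get i := Iff.rfl

lemma empty_mem_sInf : (∅ : Set (WordsInf A)) ∈ SInf A := Or.inl (Or.inl rfl)

lemma single_mem_sInf (u : List A) : ({Sum.inl u} : Set (WordsInf A)) ∈ SInf A :=
  Or.inl (Or.inr ⟨u, rfl⟩)

lemma cone_mem_sInf (u : List A) : ConeInf u ∈ SInf A := Or.inr ⟨u, rfl⟩

lemma cone_mono {u v : List A} (h : u <+: v) : ConeInf v ⊆ ConeInf u := by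
  rintro (x | f) hx
  · exact h.trans hx
  · intro i
    have hlt : (i : ℕ) < v.length := lt_of_lt_of_le i.2 h.length_le
    have := hx ⟨i, hlt⟩
    simp only [List.get_eq_getElem] at this ⊢
    rw [this, h.getElem i.2]

lemma inl_mem_cone_self (u : List A) : Sum.inl u ∈ ConeInf u := List.prefix_refl u

lemma inl_not_mem_cone_of_longer {u v : List A} (h : u.length < v.length) :
    Sum.inl u ∉ ConeInf v := fun hx => absurd (List.IsPrefix.length_le hx) (by omega)

/-- agree with same infinite word + shorter → prefix -/
lemma prefix_of_agree {u v : List A} {f : ℕ → A}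
    (hu : Sum.inr f ∈ ConeInf u) (hv : Sum.inr f ∈ ConeInf v)
    (h : u.length ≤ v.length) : u <+: v := by
  have : u = v.take u.length := by
    apply List.ext_getElem
    · simp [Nat.min_eq_left h]
    · intro i h1 h2
      have hiu := hu ⟨i, h1⟩
      have hiv := hv ⟨i, lt_of_lt_of_le h1 h⟩
      simp only [List.get_eq_getElem] at hiu hiv
      simp [← hiu, hiv]
  rw [this]
  exact List.take_prefix _ _

lemma comparable_of_mem {u v : List A} {w : WordsInf A}
    (hu : w ∈ ConeInf u) (hv : w ∈ ConeInf v) : u <+: v ∨ v <+: u := by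
  cases w with
  | inl x => exact List.prefix_or_prefix_of_prefix hu hv
  | inr f =>
    rcases le_total u.length v.length with h | h
    · exact Or.inl (prefix_of_agree hu hv h)
    · exact Or.inr (prefix_of_agree hv hu h)

lemma cone_disjoint {u v : List A} (hu : ¬ u <+: v) (hv : ¬ v <+: u) :
    Disjoint (ConeInf u) (ConeInf v) := by
  rw [Set.disjoint_left]
  intro w hwu hwv
  rcases comparable_of_mem hwu hwv with h | h
  · exact hu h
  · exact hv h

lemma inr_mem_cone_concat {u : List A} {f : ℕ → A} (h : Sum.inr f ∈ ConeInf u) :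
    Sum.inr f ∈ ConeInf (u ++ [f u.length]) := by
  intro i
  rcases Nat.lt_or_ge (i : ℕ) u.length with hi | hi
  · have := h ⟨i, hi⟩
    simp only [List.get_eq_getElem] at this ⊢
    rw [List.getElem_append_left hi]
    exact this
  · have hieq : (i : ℕ) = u.length := by
      have := i.2
      simp at this
      omega
    simp only [List.get_eq_getElem]
    rw [List.getElem_append_right (by omega)]
    simp [hieq]

lemma single_not_mem_concat_cone (u : List A) (b : A) :
    Sum.inl u ∉ ConeInf (u ++ [b]) :=
  inl_not_mem_cone_of_longer (by simp)

/-- `Cone u \ {u} = ⋃ b, Cone (u ++ [b])` -/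
lemma cone_diff_single (u : List A) :
    ConeInf u \ {Sum.inl u} = ⋃ b : A, ConeInf (u ++ [b]) := by
  ext w
  simp only [Set.mem_diff, Set.mem_singleton_iff, Set.mem_iUnion]
  constructor
  · rintro ⟨hw, hne⟩
    cases w with
    | inl x =>
      rcases hw with ⟨t, rfl⟩
      cases t with
      | nil => simp at hne
      | cons c rest =>
        exact ⟨c, by rw [mem_cone_inl]; exact ⟨rest, by simp⟩⟩
    | inr f => exact ⟨f u.length, inr_mem_cone_concat hw⟩
  · rintro ⟨b, hb⟩
    refine ⟨cone_mono ⟨[b], rfl⟩ hb, ?_⟩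
    rintro rfl
    exact single_not_mem_concat_cone u b hb

/-- `Cone u \ Cone (u ++ [a]) = {u} ∪ ⋃ b ≠ a, Cone (u ++ [b])` -/
lemma cone_diff_cone_concat (u : List A) (a : A) :
    ConeInf u \ ConeInf (u ++ [a]) =
      {Sum.inl u} ∪ ⋃ b ∈ {b : A | b ≠ a}, ConeInf (u ++ [b]) := by
  ext w
  simp only [Set.mem_diff, Set.mem_union, Set.mem_singleton_iff, Set.mem_iUnion,
    Set.mem_setOf_eq, exists_prop]
  constructor
  · rintro ⟨hw, hna⟩
    by_cases hwu : w = Sum.inl u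
    · exact Or.inl hwu
    · right
      have : w ∈ ⋃ b : A, ConeInf (u ++ [b]) := by
        rw [← cone_diff_single]
        exact ⟨hw, hwu⟩
      rcases Set.mem_iUnion.mp this with ⟨b, hb⟩
      refine ⟨b, fun hba => hna (hba ▸ hb), hb⟩
  · rintro (rfl | ⟨b, hba, hb⟩)
    · exact ⟨inl_mem_cone_self u, single_not_mem_concat_cone u a⟩
    · refine ⟨cone_mono ⟨[b], rfl⟩ hb, fun hx => ?_⟩
      have : Disjoint (ConeInf (u ++ [b])) (ConeInf (u ++ [a])) := by
        apply cone_disjoint <;>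
        · intro h
          have := List.IsPrefix.eq_of_length h (by simp)
          simp only [List.append_cancel_left_eq, List.cons.injEq, and_true] at this
          first | exact hba this | exact hba this.symm
      exact Set.disjoint_left.mp this hb hx

open Finset in
/-- Main inductive lemma: `Cone u \ Cone (u ++ w)` is a finite disjoint union in `S_∞`. -/
lemma diff_cone_aux [Fintype A] (w u : List A) :
    ∃ I : Finset (Set (WordsInf A)), ↑I ⊆ SInf A ∧
      (↑I : Set (Set (WordsInf A))).PairwiseDisjoint id ∧
      ConeInf u \ ConeInf (u ++ w) = ⋃₀ ↑I := by
  classical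
  induction w generalizing u with
  | nil => exact ⟨∅, by simp, by simp, by simp⟩
  | cons a w ih =>
    obtain ⟨J, hJC, hJd, hJU⟩ := ih (u ++ [a])
    set S : Finset (Set (WordsInf A)) :=
      (Finset.univ.filter (· ≠ a)).image (fun b => ConeInf (u ++ [b])) with hS
    refine ⟨J ∪ insert {Sum.inl u} S, ?_, ?_, ?_⟩
    · intro s hs
      simp only [coe_union, coe_insert, Set.mem_union, Set.mem_insert_iff, mem_coe] at hs
      rcases hs with hs | rfl | hs
      · exact hJC hs
      · exact single_mem_sInf u
      · simp only [hS, Finset.mem_image] at hs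
        obtain ⟨b, _, rfl⟩ := hs
        exact cone_mem_sInf _
    · -- pairwise disjointness
      have hJsub : ∀ s ∈ J, s ⊆ ConeInf (u ++ [a]) := by
        intro s hs
        intro x hx
        have : x ∈ ⋃₀ (↑J : Set (Set (WordsInf A))) := ⟨s, hs, hx⟩
        rw [← hJU] at this
        exact this.1
      intro s hs t ht hst
      simp only [Function.onFun, id_eq]
      simp only [coe_union, coe_insert, Set.mem_union, Set.mem_insert_iff, mem_coe, hS,
        Finset.coe_image, Set.mem_image, Finset.mem_coe, Finset.mem_filter, Finset.mem_univ,
        true_and] at hs ht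
      have hdisj_single_cone : ∀ v : List A, ∀ b : A,
          Disjoint ({Sum.inl v} : Set (WordsInf A)) (ConeInf (v ++ [b])) := by
        intro v b
        rw [Set.disjoint_left]
        rintro x rfl
        exact single_not_mem_concat_cone v b
      have hdisj_cones : ∀ b c : A, b ≠ c →
          Disjoint (ConeInf (u ++ [b])) (ConeInf (u ++ [c])) := by
        intro b c hbc
        apply cone_disjoint <;>
        · intro h
          have := List.IsPrefix.eq_of_length h (by simp)
          simp only [List.append_cancel_left_eq, List.cons.injEq, and_true] at this
          first | exact hbc this | exact hbc this.symm
      rcases hs with hs | rfl | ⟨b, hb, rfl⟩ <;> rcases ht with ht | rfl | ⟨c, hc, rfl⟩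
      · exact hJd hs ht hst
      · rw [Set.disjoint_right]
        rintro x rfl hx
        exact single_not_mem_concat_cone u a (hJsub _ hs hx)
      · exact Set.disjoint_left.mpr fun x hx hx2 =>
          Set.disjoint_left.mp (hdisj_cones a c (fun h => hc h.symm)) (hJsub _ hs hx) hx2
      · rw [Set.disjoint_left]
        rintro x rfl hx
        exact single_not_mem_concat_cone u a (hJsub _ ht hx)
      · exact absurd rfl hst
      · exact hdisj_single_cone u c
      · exact Set.disjoint_left.mpr fun x hx hx2 =>
          Set.disjoint_left.mp (hdisj_cones b a hb) hx (hJsub _ ht hx2)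
      · exact (hdisj_single_cone u b).symm
      · exact hdisj_cones b c (fun h => hst (by rw [h]))
    · -- the union
      have h1 : ConeInf (u ++ a :: w) = ConeInf ((u ++ [a]) ++ w) := by simp
      have hsub1 : ConeInf ((u ++ [a]) ++ w) ⊆ ConeInf (u ++ [a]) :=
        cone_mono ⟨w, rfl⟩
      have hsub2 : ConeInf (u ++ [a]) ⊆ ConeInf u := cone_mono ⟨[a], rfl⟩
      rw [h1, ← Set.diff_union_diff_cancel hsub2 hsub1, cone_diff_cone_concat u a, hJU]
      rw [coe_union, Set.sUnion_union, coe_insert, Set.sUnion_insert, hS, Finset.coe_image,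
        Set.sUnion_image]
      rw [Set.union_comm (⋃₀ (↑J : Set (Set (WordsInf A))))]
      congr 2
      ext x
      simp

lemma cone_diff_single_finset [Fintype A] (u v : List A) (huv : u <+: v) :
    ∃ I : Finset (Set (WordsInf A)), ↑I ⊆ SInf A ∧
      (↑I : Set (Set (WordsInf A))).PairwiseDisjoint id ∧
      ConeInf u \ {Sum.inl v} = ⋃₀ ↑I := by
  classical
  obtain ⟨w, rfl⟩ := huv
  obtain ⟨J, hJC, hJd, hJU⟩ := diff_cone_aux w u
  set S : Finset (Set (WordsInf A)) :=
    Finset.univ.image (fun b => ConeInf ((u ++ w) ++ [b])) with hS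
  have hJsub : ∀ s ∈ J, Disjoint s (ConeInf (u ++ w)) := by
    intro s hs
    rw [Set.disjoint_left]
    intro x hx
    have : x ∈ ⋃₀ (↑J : Set (Set (WordsInf A))) := ⟨s, hs, hx⟩
    rw [← hJU] at this
    exact this.2
  refine ⟨J ∪ S, ?_, ?_, ?_⟩
  · intro s hs
    simp only [Finset.coe_union, Set.mem_union, Finset.mem_coe] at hs
    rcases hs with hs | hs
    · exact hJC hs
    · simp only [hS, Finset.mem_image] at hs
      obtain ⟨b, _, rfl⟩ := hs
      exact cone_mem_sInf _
  · intro s hs t ht hst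
    simp only [Function.onFun, id_eq]
    simp only [Finset.coe_union, Set.mem_union, Finset.mem_coe, hS, Finset.coe_image,
      Set.mem_image, Finset.coe_univ, Set.mem_univ, true_and, Set.image_univ,
      Set.mem_range] at hs ht
    have hdisj_cones : ∀ b c : A, b ≠ c →
        Disjoint (ConeInf ((u ++ w) ++ [b])) (ConeInf ((u ++ w) ++ [c])) := by
      intro b c hbc
      apply cone_disjoint <;>
      · intro h
        have := List.IsPrefix.eq_of_length h (by simp)
        simp only [List.append_cancel_left_eq, List.cons.injEq, and_true] at this
        first | exact hbc this | exact hbc this.symm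
    rcases hs with hs | ⟨b, rfl⟩ <;> rcases ht with ht | ⟨c, rfl⟩
    · exact hJd hs ht hst
    · exact Set.disjoint_left.mpr fun x hx hx2 =>
        Set.disjoint_left.mp (hJsub _ hs) hx (cone_mono ⟨[c], rfl⟩ hx2)
    · exact Set.disjoint_right.mpr fun x hx hx2 =>
        Set.disjoint_left.mp (hJsub _ ht) hx (cone_mono ⟨[b], rfl⟩ hx2)
    · exact hdisj_cones b c (fun h => hst (by rw [h]))
  · have hss : ({Sum.inl (u ++ w)} : Set (WordsInf A)) ⊆ ConeInf (u ++ w) := by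
      rintro x rfl
      exact inl_mem_cone_self _
    have hcc : ConeInf (u ++ w) ⊆ ConeInf u := cone_mono ⟨w, rfl⟩
    rw [← Set.diff_union_diff_cancel hcc hss, cone_diff_single (u ++ w), hJU]
    rw [Finset.coe_union, Set.sUnion_union, hS, Finset.coe_image, Set.sUnion_image]
    congr 1
    ext x
    simp

end SInfAux

open SInfAux in
/-- for a finite alphabet `A`, `S_∞` is a semiring of sets on `A^∞`. -/
theorem sInf_isSetSemiring (A : Type*) [Fintype A] :
    MeasureTheory.IsSetSemiring (SInf A) := by
  classical
  constructor
  · exact empty_mem_sInf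
  · -- intersections
    rintro s hs t ht
    rcases hs with (rfl | ⟨u, rfl⟩) | ⟨u, rfl⟩
    · simp [empty_mem_sInf]
    all_goals rcases ht with (rfl | ⟨v, rfl⟩) | ⟨v, rfl⟩
    · simp [empty_mem_sInf]
    · by_cases h : u = v
      · subst h; simp [single_mem_sInf]
      · rw [Set.singleton_inter_eq_empty.mpr (by simp [h])]
        exact empty_mem_sInf
    · by_cases h : Sum.inl u ∈ ConeInf v
      · rw [Set.inter_eq_self_of_subset_left (Set.singleton_subset_iff.mpr h)]
        exact single_mem_sInf u
      · rw [Set.singleton_inter_eq_empty.mpr h]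
        exact empty_mem_sInf
    · simp [empty_mem_sInf]
    · by_cases h : Sum.inl v ∈ ConeInf u
      · rw [Set.inter_eq_self_of_subset_right (Set.singleton_subset_iff.mpr h)]
        exact single_mem_sInf v
      · rw [Set.inter_singleton_eq_empty.mpr h]
        exact empty_mem_sInf
    · by_cases huv : u <+: v
      · rw [Set.inter_eq_self_of_subset_right (cone_mono huv)]
        exact cone_mem_sInf v
      · by_cases hvu : v <+: u
        · rw [Set.inter_eq_self_of_subset_left (cone_mono hvu)]
          exact cone_mem_sInf u
        · rw [Set.disjoint_iff_inter_eq_empty.mp (cone_disjoint huv hvu)]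
          exact empty_mem_sInf
  · -- differences
    rintro s hs t ht
    rcases hs with (rfl | ⟨u, rfl⟩) | ⟨u, rfl⟩
    · exact ⟨∅, by simp, by simp, by simp⟩
    · by_cases h : Sum.inl u ∈ t
      · exact ⟨∅, by simp, by simp, by simp [Set.diff_eq_empty.mpr (Set.singleton_subset_iff.mpr h)]⟩
      · refine ⟨{{Sum.inl u}}, by simp [single_mem_sInf], by simp, ?_⟩
        rw [(Set.disjoint_singleton_left.mpr h).sdiff_eq_left]
        simp
    · rcases ht with (rfl | ⟨v, rfl⟩) | ⟨v, rfl⟩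
      · exact ⟨{ConeInf u}, by simp [cone_mem_sInf], by simp, by simp⟩
      · by_cases huv : u <+: v
        · exact cone_diff_single_finset u v huv
        · refine ⟨{ConeInf u}, by simp [cone_mem_sInf], by simp, ?_⟩
          have hd : Disjoint (ConeInf u) ({Sum.inl v} : Set (WordsInf A)) :=
            Set.disjoint_singleton_right.mpr huv
          rw [hd.sdiff_eq_left]
          simp
      · by_cases hvu : v <+: u
        · exact ⟨∅, by simp, by simp, by simp [Set.diff_eq_empty.mpr (cone_mono hvu)]⟩
        · by_cases huv : u <+: v
          · obtain ⟨w, rfl⟩ := huv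
            obtain ⟨J, h1, h2, h3⟩ := diff_cone_aux w u
            exact ⟨J, h1, h2, h3⟩
          · refine ⟨{ConeInf u}, by simp [cone_mem_sInf], by simp, ?_⟩
            rw [(cone_disjoint huv hvu).sdiff_eq_left]
            simp
end

section
/- If (S_n)_{n∈ℕ} is a sequence of pairwise disjoint sets in S_ω (the semiring of ∅ and ω-cones over a finite alphabet A) whose union is itself an element of S_ω, then S_n = ∅ for all but finitely many n. -/
open MeasureTheory

/-- The ω-cone of a finite word `u`: all infinite words having `u` as a prefix. -/
def ConeOmega {A : Type*} (u : List A) : Set (ℕ → A) :=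
  {v | ∀ i : Fin u.length, v i = u.get i}

/-- `S_ω`: the empty set together with all ω-cones. -/
def SOmega (A : Type*) : Set (Set (ℕ → A)) :=
  {∅} ∪ {s | ∃ u : List A, s = ConeOmega u}

/-- a countable disjoint family in `S_ω` whose union lies in `S_ω`
has all but finitely many members empty. -/
theorem sOmega_union_finitely_many_nonempty (A : Type*) [Fintype A] [Nonempty A]
    (S : ℕ → Set (ℕ → A)) (hS : ∀ n, S n ∈ SOmega A)
    (hdisj : Pairwise fun m n => Disjoint (S m) (S n))
    (hunion : (⋃ n, S n) ∈ SOmega A) :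
    {n | S n ≠ ∅}.Finite := by
  letI : TopologicalSpace A := ⊥
  haveI : DiscreteTopology A := ⟨rfl⟩
  have hcone_eq : ∀ u : List A,
      ConeOmega u = ⋂ i : Fin u.length, (fun v : ℕ → A => v i) ⁻¹' {u.get i} := by
    intro u; ext v; simp [ConeOmega]
  have hopen : ∀ u : List A, IsOpen (ConeOmega (A := A) u) := by
    intro u; rw [hcone_eq]
    exact isOpen_iInter_of_finite fun i =>
      (continuous_apply (i : ℕ)).isOpen_preimage _ (isOpen_discrete _)
  have hclosed : ∀ u : List A, IsClosed (ConeOmega (A := A) u) := by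
    intro u; rw [hcone_eq]
    exact isClosed_iInter fun i =>
      (isClosed_discrete _).preimage (continuous_apply (i : ℕ))
  have hSopen : ∀ n, IsOpen (S n) := by
    intro n
    rcases hS n with h | ⟨u, hu⟩
    · simp only [Set.mem_singleton_iff] at h; rw [h]; exact isOpen_empty
    · rw [hu]; exact hopen u
  rcases hunion with h | ⟨u, hu⟩
  · simp only [Set.mem_singleton_iff] at h
    have : {n | S n ≠ ∅} = ∅ := by
      ext n
      simp only [Set.mem_setOf_eq, Set.mem_empty_iff_false, iff_false, not_not]
      have := Set.subset_iUnion S n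
      rw [h] at this
      exact Set.subset_eq_empty this rfl
    rw [this]; exact Set.finite_empty
  · have hcomp : IsCompact (ConeOmega (A := A) u) := (hclosed u).isCompact
    obtain ⟨t, ht⟩ := hcomp.elim_finite_subcover S hSopen (hu ▸ subset_rfl)
    apply Set.Finite.subset t.finite_toSet
    intro n hn
    obtain ⟨x, hx⟩ := Set.nonempty_iff_ne_empty.2 hn
    have hxu : x ∈ ConeOmega u := by rw [← hu]; exact Set.mem_iUnion.2 ⟨n, hx⟩
    obtain ⟨m, hm, hxm⟩ := Set.mem_iUnion₂.1 (ht hxu)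
    rcases eq_or_ne m n with rfl | hmn
    · exact hm
    · exact absurd rfl ((hdisj hmn).ne_of_mem hxm hx)
end

section
/- If (S_n)_{n∈ℕ} is a sequence of pairwise disjoint sets in S_∞ (the semiring of ∅, singletons of finite words, and ∞-cones over a finite alphabet A) whose union is itself an element of S_∞, then S_n = ∅ for all but finitely many n. -/
open MeasureTheory

section Aux

variable {A : Type*} [Nonempty A]

/-- Cylinder of a finite word inside `A^ω`. -/
def cylAux (u : List A) : Set (ℕ → A) := {f | ∀ i : Fin u.length, f i = u.get i}

lemma mem_cone_inr_aux {u : List A} {f : ℕ → A} :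
    Sum.inr f ∈ ConeInf u ↔ f ∈ cylAux u := Iff.rfl

lemma mem_cone_inl_aux {u v : List A} :
    Sum.inl v ∈ ConeInf u ↔ u <+: v := Iff.rfl

/-- An infinite extension of a finite word. -/
noncomputable def extwAux (u : List A) : ℕ → A :=
  fun i => if h : i < u.length then u.get ⟨i, h⟩ else Classical.arbitrary A

lemma extw_mem_aux (u : List A) : extwAux u ∈ cylAux u :=
  fun i => dif_pos i.2

lemma extw_eq_get {u : List A} {i : ℕ} (h : i < u.length) :
    extwAux u i = u.get ⟨i, h⟩ := dif_pos h

lemma prefix_of_agree {u v : List A} (hle : u.length ≤ v.length)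
    (h : ∀ i (hi : i < u.length), v[i]'(lt_of_lt_of_le hi hle) = u[i]) : u <+: v := by
  have hv : v.take u.length = u := by
    apply List.ext_getElem
    · simp [hle]
    · intro i h1 h2
      rw [List.getElem_take]
      exact h i h2
  exact hv ▸ List.take_prefix _ _

lemma cyl_mono {u v : List A} (h : u <+: v) : cylAux v ⊆ cylAux u := by
  intro f hf i
  have := hf ⟨i, lt_of_lt_of_le i.2 h.length_le⟩
  simp only [List.get_eq_getElem] at this ⊢
  rw [this, List.IsPrefix.getElem h]

end Aux

/-- a countable disjoint family in `S_∞` whose union lies in `S_∞`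
has all but finitely many members empty. -/
theorem sInf_union_finitely_many_nonempty (A : Type*) [Fintype A] [Nonempty A]
    (S : ℕ → Set (WordsInf A)) (hS : ∀ n, S n ∈ SInf A)
    (hdisj : Pairwise fun m n => Disjoint (S m) (S n))
    (hunion : (⋃ n, S n) ∈ SInf A) :
    {n | S n ≠ ∅}.Finite := by
  classical
  have hclass : ∀ n, S n = ∅ ∨ (∃ u : List A, S n = {Sum.inl u}) ∨
      ∃ u : List A, S n = ConeInf u := by
    intro n
    have := hS n
    simp only [SInf, Set.mem_union, Set.mem_singleton_iff, Set.mem_setOf_eq] at this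
    tauto
  -- if the union is a subsingleton, only one set can be nonempty
  have subsingleton_case : (⋃ n, S n).Subsingleton → {n | S n ≠ ∅}.Finite := by
    intro hsub
    apply Set.Subsingleton.finite
    intro n hn m hm
    obtain ⟨x, hx⟩ := Set.nonempty_iff_ne_empty.2 hn
    obtain ⟨y, hy⟩ := Set.nonempty_iff_ne_empty.2 hm
    have hxy : x = y := hsub (Set.mem_iUnion.2 ⟨n, hx⟩) (Set.mem_iUnion.2 ⟨m, hy⟩)
    by_contra hne
    exact (hdisj hne).ne_of_mem hx hy hxy
  rcases hunion with (hu | hu) | hu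
  · exact subsingleton_case (by simp only [Set.mem_singleton_iff] at hu; rw [hu]; exact
      Set.subsingleton_empty)
  · obtain ⟨u, hu⟩ := hu
    exact subsingleton_case (by rw [hu]; exact Set.subsingleton_singleton)
  obtain ⟨u₀, hu₀⟩ := hu
  -- topology on A : discrete, so A^ω is compact
  letI : TopologicalSpace A := ⊥
  haveI : DiscreteTopology A := ⟨rfl⟩
  -- choice function for cone words
  set u : ℕ → List A := fun n =>
    if h : ∃ w : List A, S n = ConeInf w then h.choose else [] with hu_def
  have hu_spec : ∀ n, (∃ w : List A, S n = ConeInf w) → S n = ConeInf (u n) := by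
    intro n h
    simp only [hu_def, dif_pos h]
    exact h.choose_spec
  set U : ℕ → Set (ℕ → A) := fun n =>
    if ∃ w : List A, S n = ConeInf w then cylAux (u n) else ∅ with hU_def
  have hUopen : ∀ n, IsOpen (U n) := by
    intro n
    simp only [hU_def]
    split
    · have : cylAux (u n) = ⋂ i : Fin (u n).length, (fun f : ℕ → A => f i) ⁻¹' {(u n).get i} :=
        by ext f; simp [cylAux]
      rw [this]
      exact isOpen_iInter_of_finite fun i =>
        (continuous_apply (i : ℕ)).isOpen_preimage _ (isOpen_discrete _)
    · exact isOpen_empty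
  have hcyl_closed : ∀ w : List A, IsClosed (cylAux w) := by
    intro w
    have : cylAux w = ⋂ i : Fin w.length, (fun f : ℕ → A => f i) ⁻¹' {w.get i} :=
      by ext f; simp [cylAux]
    rw [this]
    exact isClosed_iInter fun i =>
      (IsClosed.preimage (continuous_apply (i : ℕ)) isClosed_singleton)
  -- classification of a set containing an infinite word
  have hcone_of_inr : ∀ n (f : ℕ → A), Sum.inr f ∈ S n → S n = ConeInf (u n) := by
    intro n f hf
    rcases hclass n with h | ⟨w, h⟩ | h
    · rw [h] at hf; exact absurd hf (Set.notMem_empty _)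
    · rw [h] at hf; simp at hf
    · exact hu_spec n h
  -- the cylinders cover
  have hcover : cylAux u₀ ⊆ ⋃ n, U n := by
    intro f hf
    have : Sum.inr f ∈ ⋃ n, S n := by rw [hu₀]; exact hf
    obtain ⟨n, hn⟩ := Set.mem_iUnion.1 this
    have hcone := hcone_of_inr n f hn
    refine Set.mem_iUnion.2 ⟨n, ?_⟩
    have hex : ∃ w : List A, S n = ConeInf w := ⟨u n, hcone⟩
    simp only [hU_def, if_pos hex]
    rw [hcone] at hn
    exact hn
  have hcompact : IsCompact (cylAux u₀ : Set (ℕ → A)) :=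
    (hcyl_closed u₀).isCompact
  obtain ⟨t, ht⟩ := hcompact.elim_finite_subcover U hUopen hcover
  -- any point of U m witnesses membership in S m
  have hU_mem : ∀ m (f : ℕ → A), f ∈ U m → Sum.inr f ∈ S m := by
    intro m f hf
    simp only [hU_def] at hf
    split at hf
    · next hex => rw [hu_spec m hex]; exact hf
    · exact absurd hf (Set.notMem_empty _)
  -- every nonempty cone index lies in t
  have hcone_in_t : ∀ n, S n ≠ ∅ → (∃ w : List A, S n = ConeInf w) → n ∈ t := by
    intro n _ hex
    have hcone := hu_spec n hex
    have hmem : Sum.inr (extwAux (u n)) ∈ S n := by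
      rw [hcone]; exact extw_mem_aux (u n)
    have : Sum.inr (extwAux (u n)) ∈ ⋃ k, S k := Set.mem_iUnion.2 ⟨n, hmem⟩
    rw [hu₀] at this
    have : extwAux (u n) ∈ ⋃ m ∈ t, U m := ht this
    obtain ⟨m, hmt, hmU⟩ := Set.mem_iUnion₂.1 this
    have hm : Sum.inr (extwAux (u n)) ∈ S m := hU_mem m _ hmU
    by_cases hnm : n = m
    · exact hnm ▸ hmt
    · exact absurd rfl ((hdisj hnm).ne_of_mem hmem hm)
  -- bound on singleton words
  set L : ℕ := t.sup fun m => (u m).length with hL_def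
  have hsingleton_bound : ∀ n (w : List A), S n = {Sum.inl w} → w.length < L := by
    intro n w hn
    have hwu : Sum.inl w ∈ ⋃ k, S k := Set.mem_iUnion.2 ⟨n, by rw [hn]; rfl⟩
    rw [hu₀] at hwu
    have hpre : u₀ <+: w := hwu
    have hfw : extwAux w ∈ cylAux u₀ := cyl_mono hpre (extw_mem_aux w)
    obtain ⟨m, hmt, hmU⟩ := Set.mem_iUnion₂.1 (ht hfw)
    have hex : ∃ w' : List A, S m = ConeInf w' := by
      by_contra h
      simp only [hU_def, if_neg h] at hmU
      exact hmU
    have hmcone := hu_spec m hex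
    simp only [hU_def, if_pos hex] at hmU
    -- m ≠ n
    have hmn : m ≠ n := by
      intro h
      have : Sum.inr (extwAux (u m)) ∈ S m := by rw [hmcone]; exact extw_mem_aux _
      rw [h, hn] at this
      simp at this
    -- If (u m).length ≤ w.length, contradiction with disjointness
    by_contra hlen
    push_neg at hlen
    have hle : (u m).length ≤ w.length := le_trans (Finset.le_sup (f := fun m => (u m).length) hmt) hlen
    have hpre2 : u m <+: w := by
      apply prefix_of_agree hle
      intro i hi
      have h1 := hmU ⟨i, hi⟩
      have h2 : extwAux w i = w[i] := extw_eq_get (lt_of_lt_of_le hi hle)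
      simp only [List.get_eq_getElem] at h1
      rw [h2] at h1
      exact h1
    have hinl : Sum.inl w ∈ S m := by rw [hmcone]; exact hpre2
    have hinl' : Sum.inl w ∈ S n := by rw [hn]; rfl
    exact absurd rfl ((hdisj hmn).ne_of_mem hinl hinl')
  -- singleton choice function
  set v : ℕ → List A := fun n =>
    if h : ∃ w : List A, S n = {Sum.inl w} then h.choose else [] with hv_def
  have hv_spec : ∀ n, (∃ w : List A, S n = {Sum.inl w}) → S n = {Sum.inl (v n)} := by
    intro n h
    simp only [hv_def, dif_pos h]
    exact h.choose_spec
  set E : Set ℕ := {n | ∃ w : List A, S n = {Sum.inl w}} with hE_def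
  have hEfin : E.Finite := by
    apply Set.Finite.of_finite_image (f := v)
    · apply Set.Finite.subset (List.finite_length_lt A L)
      rintro w ⟨n, hn, rfl⟩
      exact hsingleton_bound n (v n) (hv_spec n hn)
    · intro n hn m hm hvnm
      by_contra hne
      have h1 := hv_spec n hn
      have h2 := hv_spec m hm
      have : Sum.inl (v n) ∈ S n := by rw [h1]; rfl
      have h3 : Sum.inl (v n) ∈ S m := by rw [h2, hvnm]; rfl
      exact absurd rfl ((hdisj hne).ne_of_mem this h3)
  apply Set.Finite.subset ((t.finite_toSet).union hEfin)
  intro n hn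
  rcases hclass n with h | h | h
  · exact absurd h hn
  · exact Or.inr h
  · exact Or.inl (hcone_in_t n hn h)
end

section
/- A map μ : S_ω → [0,∞] with μ(∅) = 0 is σ-additive on the semiring S_ω if and only if for all u ∈ A*, μ(Cone_ω(u)) = Σ_{a∈A} μ(Cone_ω(ua)). -/
open MeasureTheory ENNReal

/-- σ-additivity of a set function on a collection `C`. -/
def SigmaAdditiveOn {W : Type*} (C : Set (Set W)) (μ : Set W → ℝ≥0∞) : Prop :=
  ∀ S : ℕ → Set W, (∀ n, S n ∈ C) → (Pairwise fun m n => Disjoint (S m) (S n)) →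
    (⋃ n, S n) ∈ C → μ (⋃ n, S n) = ∑' n, μ (S n)

namespace SOmegaAux

variable {A : Type*}

lemma mem_coneOmega {v : ℕ → A} {u : List A} :
    v ∈ ConeOmega u ↔ ∀ (i : ℕ) (h : i < u.length), v i = u[i] := by
  constructor
  · intro hv i h; exact hv ⟨i, h⟩
  · intro hv i; exact hv i i.isLt

lemma coneOmega_mono {u t : List A} (h : u <+: t) : ConeOmega t ⊆ ConeOmega u := by
  intro v hv
  rw [mem_coneOmega] at hv ⊢
  intro i hi
  rw [hv i (lt_of_lt_of_le hi h.length_le)]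
  exact (h.getElem hi).symm

lemma prefix_of_mem_cones {v : ℕ → A} {u t : List A} (hu : v ∈ ConeOmega u)
    (ht : v ∈ ConeOmega t) (h : u.length ≤ t.length) : u <+: t := by
  rw [mem_coneOmega] at hu ht
  rw [List.prefix_iff_eq_take]
  refine List.ext_getElem (by simp [h]) (fun i h1 h2 => ?_)
  rw [List.getElem_take, ← hu i h1, ht i (lt_of_lt_of_le h1 h)]

lemma prefix_eq_of_length_eq {l₁ l₂ : List A} (h : l₁ <+: l₂) (he : l₁.length = l₂.length) :
    l₁ = l₂ := by
  rw [List.prefix_iff_eq_take] at h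
  rw [h, he, List.take_length]

lemma cone_nonempty [Inhabited A] (u : List A) : (ConeOmega u).Nonempty := by
  refine ⟨fun i => if h : i < u.length then u[i] else default, ?_⟩
  rw [mem_coneOmega]
  intro i h; simp [h]

lemma pad_mem [Inhabited A] {N : ℕ} (f : Fin N → A) :
    (fun i => if h : i < N then f ⟨i, h⟩ else default) ∈ ConeOmega (List.ofFn f) := by
  rw [mem_coneOmega]
  intro i h
  rw [List.length_ofFn] at h
  simp [h, List.getElem_ofFn]

lemma concat_prefix_iff {u l : List A} {a : A} (h : u.length < l.length) :
    u ++ [a] <+: l ↔ (u <+: l ∧ l[u.length] = a) := by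
  constructor
  · intro hp
    have h1 : u <+: l := (List.prefix_append u [a]).trans hp
    have h2 : (u ++ [a])[u.length]'(by simp) = l[u.length] := hp.getElem (by simp)
    rw [List.getElem_concat_length (l := u) (a := a) rfl] at h2
    exact ⟨h1, h2.symm⟩
  · rintro ⟨h1, h2⟩
    obtain ⟨r, rfl⟩ := h1
    have hr : r ≠ [] := by
      intro h'; subst h'; simp at h
    obtain ⟨b, r', rfl⟩ := List.exists_cons_of_ne_nil hr
    have hb : (u ++ b :: r')[u.length]'(by simp) = b := by
      rw [List.getElem_append_right (le_refl _)]; simp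
    rw [hb] at h2
    subst h2
    exact ⟨r', by simp⟩

lemma cone_concat_disjoint {u : List A} {a b : A} (hab : a ≠ b) :
    Disjoint (ConeOmega (u ++ [a])) (ConeOmega (u ++ [b])) := by
  rw [Set.disjoint_left]
  intro v hva hvb
  rw [mem_coneOmega] at hva hvb
  have h1 := hva u.length (by simp)
  have h2 := hvb u.length (by simp)
  rw [List.getElem_concat_length (l := u) (a := a) rfl] at h1
  rw [List.getElem_concat_length (l := u) (a := b) rfl] at h2
  exact hab (h1 ▸ h2)

lemma mem_cone_concat {v : ℕ → A} {u : List A} (hv : v ∈ ConeOmega u) :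
    v ∈ ConeOmega (u ++ [v u.length]) := by
  rw [mem_coneOmega] at hv ⊢
  intro i hi
  simp only [List.length_append, List.length_singleton] at hi
  rcases Nat.lt_succ_iff_lt_or_eq.mp hi with h | h
  · rw [hv i h, List.getElem_append_left h]
  · subst h
    rw [List.getElem_concat_length (l := u) rfl]

lemma isOpen_cone [TopologicalSpace A] [DiscreteTopology A] (u : List A) :
    IsOpen (ConeOmega u) := by
  have h : ConeOmega u = ⋂ i : Fin u.length, (fun v : ℕ → A => v i) ⁻¹' {u.get i} := by
    ext v; simp [ConeOmega, Set.mem_iInter]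
  rw [h]
  exact isOpen_iInter_of_finite fun i => (isOpen_discrete _).preimage (continuous_apply _)

lemma isClosed_cone [TopologicalSpace A] [DiscreteTopology A] (u : List A) :
    IsClosed (ConeOmega u) := by
  have h : ConeOmega u = ⋂ i : Fin u.length, (fun v : ℕ → A => v i) ⁻¹' {u.get i} := by
    ext v; simp [ConeOmega, Set.mem_iInter]
  rw [h]
  exact isClosed_iInter fun i => (isClosed_discrete _).preimage (continuous_apply _)

lemma cone_sum_exts_aux [Fintype A] [DecidableEq A] (μ : Set (ℕ → A) → ℝ≥0∞)
    (hstep : ∀ u : List A, μ (ConeOmega u) = ∑ a : A, μ (ConeOmega (u ++ [a])))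
    (d N : ℕ) : ∀ u : List A, u.length + d = N →
    μ (ConeOmega u) =
      ∑ f : Fin N → A, if u <+: List.ofFn f then μ (ConeOmega (List.ofFn f)) else 0 := by
  induction d with
  | zero =>
    intro u h
    simp only [Nat.add_zero] at h
    subst h
    have hothers : ∀ g : Fin u.length → A, g ∈ Finset.univ → g ≠ u.get →
        (if u <+: List.ofFn g then μ (ConeOmega (List.ofFn g)) else 0) = 0 := by
      intro g _ hg
      rw [if_neg]
      intro hpg
      exact hg (List.ofFn_inj.mp
        ((prefix_eq_of_length_eq hpg (by simp)).symm.trans (List.ofFn_get u).symm))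
    rw [Finset.sum_eq_single_of_mem u.get (Finset.mem_univ _) hothers, List.ofFn_get,
      if_pos (List.prefix_refl u)]
  | succ d ih =>
    intro u h
    have hlt : u.length < N := by omega
    calc μ (ConeOmega u)
        = ∑ a : A, ∑ f : Fin N → A,
            if u ++ [a] <+: List.ofFn f then μ (ConeOmega (List.ofFn f)) else 0 := by
          rw [hstep u]
          exact Finset.sum_congr rfl fun a _ => ih (u ++ [a]) (by simp; omega)
      _ = ∑ f : Fin N → A, ∑ a : A,
            if u ++ [a] <+: List.ofFn f then μ (ConeOmega (List.ofFn f)) else 0 :=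
          Finset.sum_comm
      _ = ∑ f : Fin N → A, if u <+: List.ofFn f then μ (ConeOmega (List.ofFn f)) else 0 := by
          refine Finset.sum_congr rfl fun f _ => ?_
          have hlen : u.length < (List.ofFn f).length := by simp [hlt]
          by_cases hp : u <+: List.ofFn f
          · simp only [concat_prefix_iff hlen, hp, true_and, Finset.sum_ite_eq,
              Finset.mem_univ, if_true]
          · rw [if_neg hp]
            refine Finset.sum_eq_zero fun a _ => ?_
            exact if_neg fun hc => hp ((List.prefix_append u [a]).trans hc)

lemma cone_sum_exts [Fintype A] [DecidableEq A] (μ : Set (ℕ → A) → ℝ≥0∞)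
    (hstep : ∀ u : List A, μ (ConeOmega u) = ∑ a : A, μ (ConeOmega (u ++ [a])))
    (u : List A) (N : ℕ) (hN : u.length ≤ N) :
    μ (ConeOmega u) =
      ∑ f : Fin N → A, if u <+: List.ofFn f then μ (ConeOmega (List.ofFn f)) else 0 :=
  cone_sum_exts_aux μ hstep (N - u.length) N u (by omega)

end SOmegaAux

open SOmegaAux in
/-- `μ` with `μ ∅ = 0` is σ-additive on `S_ω` iff
`μ(Cone_ω u) = Σ_{a ∈ A} μ(Cone_ω (u ++ [a]))` for all finite words `u`. -/
theorem sOmega_sigma_additive_iff (A : Type*) [Fintype A]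
    (μ : Set (ℕ → A) → ℝ≥0∞) (h0 : μ ∅ = 0) :
    SigmaAdditiveOn (SOmega A) μ ↔
      ∀ u : List A, μ (ConeOmega u) = ∑ a : A, μ (ConeOmega (u ++ [a])) := by
  classical
  constructor
  · -- σ-additivity → one-step additivity
    intro hσ u
    set n := Fintype.card A with hn
    set e : A ≃ Fin n := Fintype.equivFin A with he
    set S : ℕ → Set (ℕ → A) := fun k =>
      if h : k < n then ConeOmega (u ++ [e.symm ⟨k, h⟩]) else ∅ with hS
    have hmem : ∀ k, S k ∈ SOmega A := by
      intro k
      by_cases h : k < n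
      · exact Or.inr ⟨u ++ [e.symm ⟨k, h⟩], by simp [hS, h]⟩
      · exact Or.inl (by simp [hS, h])
    have hdisj : Pairwise fun k l => Disjoint (S k) (S l) := by
      intro k l hkl
      by_cases hk : k < n
      · by_cases hl : l < n
        · simp only [hS, dif_pos hk, dif_pos hl]
          apply cone_concat_disjoint
          intro hab
          exact hkl (Fin.mk.injEq _ _ _ _ ▸ (e.symm.injective hab : (⟨k, hk⟩ : Fin n) = ⟨l, hl⟩))
        · simp [hS, dif_neg hl]
      · simp [hS, dif_neg hk]
    have hU : (⋃ k, S k) = ConeOmega u := by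
      ext v
      simp only [Set.mem_iUnion]
      constructor
      · rintro ⟨k, hk⟩
        by_cases h : k < n
        · rw [hS] at hk; simp only [dif_pos h] at hk
          exact coneOmega_mono (List.prefix_append u _) hk
        · rw [hS] at hk; simp only [dif_neg h] at hk; exact absurd hk (Set.notMem_empty v)
      · intro hv
        refine ⟨(e (v u.length)).val, ?_⟩
        rw [hS]
        simp only [dif_pos (e (v u.length)).isLt, Fin.eta, Equiv.symm_apply_apply]
        exact mem_cone_concat hv
    have := hσ S hmem hdisj (hU ▸ Or.inr ⟨u, rfl⟩)
    rw [hU] at this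
    rw [this]
    rw [tsum_eq_sum (s := Finset.range n) (f := fun k => μ (S k))
      (fun k hk => by rw [hS]; simp only [dif_neg (by simpa using hk : ¬ k < n)]; exact h0)]
    rw [Finset.sum_range (fun k => μ (S k))]
    have : ∀ k : Fin n, μ (S k.val) = μ (ConeOmega (u ++ [e.symm k])) := by
      intro k
      rw [hS]; simp only [dif_pos k.isLt, Fin.eta]
    rw [Finset.sum_congr rfl (fun k _ => this k)]
    exact (Equiv.sum_comp e (fun k => μ (ConeOmega (u ++ [e.symm k])))).symm.trans
      (Finset.sum_congr rfl (fun a _ => by rw [Equiv.symm_apply_apply]))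
  · -- one-step additivity → σ-additivity
    intro hstep S hmem hdisj hU
    by_cases hA : IsEmpty A
    · haveI : IsEmpty (ℕ → A) := ⟨fun v => hA.false (v 0)⟩
      have hall : ∀ s : Set (ℕ → A), s = ∅ := fun s => Set.eq_empty_of_isEmpty s
      rw [hall (⋃ n, S n), h0]
      have hz : ∀ m, μ (S m) = 0 := fun m => by rw [hall (S m)]; exact h0
      simp [hz]
    · haveI : Inhabited A := Classical.inhabited_of_nonempty (not_isEmpty_iff.mp hA)
      rcases hU with hU | ⟨u, hu⟩
      · -- union is empty
        have hU' : (⋃ n, S n) = ∅ := hU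
        have hz : ∀ m, S m = ∅ := Set.iUnion_eq_empty.mp hU'
        rw [hU', h0]
        have : ∀ m, μ (S m) = 0 := fun m => by rw [hz m]; exact h0
        simp [this]
      · letI : TopologicalSpace A := ⊥
        haveI : DiscreteTopology A := ⟨rfl⟩
        haveI : Finite A := Finite.of_fintype A
        haveI : CompactSpace A := Finite.compactSpace
        have hcomp : IsCompact (ConeOmega u) := (isClosed_cone u).isCompact
        have hopen : ∀ m, IsOpen (S m) := by
          intro m
          rcases hmem m with h | ⟨w, hw⟩
          · rw [Set.mem_singleton_iff] at h; rw [h]; exact isOpen_empty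
          · rw [hw]; exact isOpen_cone w
        obtain ⟨t, ht⟩ := hcomp.elim_finite_subcover S hopen (hu ▸ subset_rfl)
        have hout : ∀ m ∉ t, S m = ∅ := by
          intro m hm
          by_contra hne
          obtain ⟨v, hv⟩ := Set.nonempty_iff_ne_empty.mpr hne
          have hvu : v ∈ ConeOmega u := hu ▸ Set.mem_iUnion.mpr ⟨m, hv⟩
          obtain ⟨k, hkt, hvk⟩ := Set.mem_iUnion₂.mp (ht hvu)
          have hmk : m ≠ k := fun h => hm (by rw [h]; exact hkt)
          exact Set.disjoint_left.mp (hdisj hmk) hv hvk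
        rw [hu, tsum_eq_sum (s := t) (fun m hm => by rw [hout m hm]; exact h0)]
        set t' := t.filter (fun m => (S m).Nonempty) with ht'
        have hsum' : ∑ m ∈ t', μ (S m) = ∑ m ∈ t, μ (S m) :=
          Finset.sum_filter_of_ne (fun m _ hne => by
            rcases Set.eq_empty_or_nonempty (S m) with h | h
            · exact absurd (h ▸ h0) hne
            · exact h)
        rw [← hsum']
        set w : ℕ → List A := fun m =>
          if h : ∃ l : List A, S m = ConeOmega l then h.choose else [] with hwdef
        have hw : ∀ m ∈ t', S m = ConeOmega (w m) := by
          intro m hm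
          rcases hmem m with h | ⟨l, hl⟩
          · rw [Set.mem_singleton_iff] at h
            exact absurd (h ▸ (Finset.mem_filter.mp hm).2) (by simp)
          · have hex : ∃ l : List A, S m = ConeOmega l := ⟨l, hl⟩
            rw [hwdef]; simp only [dif_pos hex]; exact hex.choose_spec
        set N := max u.length (t'.sup fun m => (w m).length) with hN
        have hNu : u.length ≤ N := le_max_left _ _
        have hNw : ∀ m ∈ t', (w m).length ≤ N :=
          fun m hm =>
            le_trans (Finset.le_sup (f := fun m => (w m).length) hm) (le_max_right _ _)
        -- the key pointwise claim
        have key : ∀ f : Fin N → A,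
            (∑ m ∈ t', if w m <+: List.ofFn f then μ (ConeOmega (List.ofFn f)) else 0) =
              (if u <+: List.ofFn f then μ (ConeOmega (List.ofFn f)) else 0) := by
          intro f
          set vf : ℕ → A := fun i => if h : i < N then f ⟨i, h⟩ else default with hvf
          have hvff : vf ∈ ConeOmega (List.ofFn f) := pad_mem f
          by_cases hp : u <+: List.ofFn f
          · have hvfu : vf ∈ ConeOmega u := coneOmega_mono hp hvff
            obtain ⟨m₀, hvm₀⟩ := Set.mem_iUnion.mp (hu.symm ▸ hvfu : vf ∈ ⋃ n, S n)
            have hm₀t : m₀ ∈ t := by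
              by_contra hc
              rw [hout m₀ hc] at hvm₀
              exact hvm₀
            have hm₀ : m₀ ∈ t' := Finset.mem_filter.mpr ⟨hm₀t, ⟨vf, hvm₀⟩⟩
            have hwm₀ : w m₀ <+: List.ofFn f :=
              prefix_of_mem_cones (hw m₀ hm₀ ▸ hvm₀) hvff
                (by rw [List.length_ofFn]; exact hNw m₀ hm₀)
            rw [if_pos hp]
            refine Finset.sum_eq_single_of_mem m₀ hm₀ ?_ |>.trans (if_pos hwm₀)
            intro m hm hne
            rw [if_neg]
            intro hwm
            have hvm : vf ∈ S m := (hw m hm) ▸ coneOmega_mono hwm hvff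
            exact Set.disjoint_left.mp (hdisj hne) hvm hvm₀
          · rw [if_neg hp]
            refine Finset.sum_eq_zero fun m hm => ?_
            rw [if_neg]
            intro hwm
            have hvm : vf ∈ S m := (hw m hm) ▸ coneOmega_mono hwm hvff
            have hvfu : vf ∈ ConeOmega u := hu ▸ Set.mem_iUnion.mpr ⟨m, hvm⟩
            exact hp (prefix_of_mem_cones hvfu hvff (by rw [List.length_ofFn]; exact hNu))
        calc μ (ConeOmega u)
            = ∑ f : Fin N → A,
                if u <+: List.ofFn f then μ (ConeOmega (List.ofFn f)) else 0 :=
              cone_sum_exts μ hstep u N hNu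
          _ = ∑ f : Fin N → A, ∑ m ∈ t',
                if w m <+: List.ofFn f then μ (ConeOmega (List.ofFn f)) else 0 :=
              Finset.sum_congr rfl fun f _ => (key f).symm
          _ = ∑ m ∈ t', ∑ f : Fin N → A,
                if w m <+: List.ofFn f then μ (ConeOmega (List.ofFn f)) else 0 :=
              Finset.sum_comm
          _ = ∑ m ∈ t', μ (S m) :=
              Finset.sum_congr rfl fun m hm => by
                rw [hw m hm]
                exact (cone_sum_exts μ hstep (w m) N (hNw m hm)).symm
end
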